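/- arXiv:2311.15186 — 2 statements merged into one kernel-verified Lean document; each statement's English description precedes it below -/
import Mathlib

section
/- Let ρ : (0,1] → ℝ be a measurable function with ρ(r) > 0 for almost every r ∈ (0,1], such that r ↦ r³ρ(r) and r ↦ r ρ(r) are integrable on (0,1) and the second-moment normalization ∫₀¹ r³ρ(r) dr = 2/π holds. Suppose there is r* ∈ (0,1] such that the map r ↦ r ρ(r) is monotone (either nonincreasing or nondecreasing) on (0, r*]. Then there exists a constant C > 0, independent of δ and k, such that for every δ > 0 and every k ∈ ℤ² \ {0}: λ_δ(k) > 0 and |1/λ_δ(k) − 1/|k|²| ≤ C δ². -/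
open Real MeasureTheory Filter Topology FourierTransform

/- ### Auxiliary Taylor-type bounds -/

lemma aux_sin_ge (x : ℝ) (hx : 0 ≤ x) : x - x^3/6 ≤ Real.sin x := by
  have h : ∀ y : ℝ, HasDerivAt (fun t => Real.sin t - t + t^3/6) (Real.cos y - 1 + y^2/2) y := by
    intro y
    have h2 : HasDerivAt (fun t : ℝ => t^3/6) (y^2/2) y := by
      have := (hasDerivAt_pow 3 y).div_const 6
      exact this.congr_deriv (by norm_num; ring)
    exact ((Real.hasDerivAt_sin y).sub (hasDerivAt_id y)).add h2
  have mono : MonotoneOn (fun t => Real.sin t - t + t^3/6) (Set.Ici 0) := by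
    apply monotoneOn_of_deriv_nonneg (convex_Ici 0)
    · exact (Continuous.continuousOn (by continuity))
    · intro y _
      exact ((h y).differentiableAt).differentiableWithinAt
    · intro y _
      rw [(h y).deriv]
      nlinarith [Real.one_sub_sq_div_two_le_cos (x := y)]
  have h0 := mono Set.self_mem_Ici hx hx
  simp only [Real.sin_zero] at h0
  nlinarith [h0]

lemma aux_cos_le (x : ℝ) : Real.cos x ≤ 1 - x^2/2 + x^4/24 := by
  have key : ∀ y : ℝ, 0 ≤ y → Real.cos y ≤ 1 - y^2/2 + y^4/24 := by
    intro y hy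
    have h : ∀ z : ℝ, HasDerivAt (fun t => 1 - t^2/2 + t^4/24 - Real.cos t)
        (-z + z^3/6 + Real.sin z) z := by
      intro z
      have h1 : HasDerivAt (fun t : ℝ => t^2/2) z z := by
        have := (hasDerivAt_pow 2 z).div_const 2
        exact this.congr_deriv (by norm_num)
      have h2 : HasDerivAt (fun t : ℝ => t^4/24) (z^3/6) z := by
        have := (hasDerivAt_pow 4 z).div_const 24
        exact this.congr_deriv (by norm_num; ring)
      have := (((hasDerivAt_const z (1:ℝ)).sub h1).add h2).sub (Real.hasDerivAt_cos z)
      exact this.congr_deriv (by ring)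
    have mono : MonotoneOn (fun t => 1 - t^2/2 + t^4/24 - Real.cos t) (Set.Ici 0) := by
      apply monotoneOn_of_deriv_nonneg (convex_Ici 0)
      · exact (Continuous.continuousOn (by continuity))
      · intro z _
        exact ((h z).differentiableAt).differentiableWithinAt
      · intro z hz
        rw [(h z).deriv]
        have hz' : 0 ≤ z := le_of_lt (by simpa using hz)
        nlinarith [aux_sin_ge z hz']
    have h0 := mono Set.self_mem_Ici hy hy
    simp only [Real.cos_zero] at h0
    nlinarith [h0]
  rcases le_total 0 x with hx | hx
  · exact key x hx
  · have h2 := key (-x) (by linarith)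
    rw [Real.cos_neg] at h2
    nlinarith [h2]

/- ### Riemann–Lebesgue for the cosine transform -/

lemma aux_RL (g : ℝ → ℝ) (hg_meas : Measurable g) (hg_int : Integrable g) :
    Tendsto (fun u : ℝ => ∫ x, g x * Real.cos (u * x)) atTop (𝓝 0) := by
  have h0 : Tendsto (fun w : ℝ => 𝓕 (fun v : ℝ => (g v : ℂ)) w) (cocompact ℝ) (𝓝 0) :=
    Real.zero_at_infty_fourier _
  have hw : Tendsto (fun u : ℝ => -u / (2 * π)) atTop (cocompact ℝ) := by
    rw [cocompact_eq_atBot_atTop]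
    apply Tendsto.mono_right _ le_sup_left
    apply Tendsto.atBot_div_const (by positivity)
    exact tendsto_neg_atBot_iff.mpr tendsto_id
  have h2 := h0.comp hw
  have h3 := (Complex.continuous_re.tendsto 0).comp h2
  simp only [Complex.zero_re] at h3
  apply h3.congr
  intro u
  show Complex.re (𝓕 (fun v : ℝ => (g v : ℂ)) (-u / (2 * π))) = _
  rw [Real.fourier_real_eq_integral_exp_smul]
  have e1 : (fun v : ℝ => Complex.exp (↑(-2 * π * v * (-u / (2 * π))) * Complex.I) • ((g v : ℂ)))
      = fun v => Complex.exp (↑(u * v) * Complex.I) * (g v : ℂ) := by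
    funext v
    have hA : (-2 * π * v * (-u / (2 * π)) : ℝ) = u * v := by
      have hπ : (π : ℝ) ≠ 0 := Real.pi_ne_zero
      field_simp
    rw [smul_eq_mul, hA]
  rw [e1]
  have hint : Integrable (fun v : ℝ => Complex.exp (↑(u * v) * Complex.I) * (g v : ℂ)) := by
    apply Integrable.mono' hg_int.abs
    · apply AEStronglyMeasurable.mul
      · exact (Complex.continuous_exp.comp (by fun_prop)).aestronglyMeasurable
      · exact (Complex.measurable_ofReal.comp hg_meas).aestronglyMeasurable
    · filter_upwards with v
      rw [norm_mul, Complex.norm_exp_ofReal_mul_I,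
        Complex.norm_real, Real.norm_eq_abs, one_mul]
  have h4 := ContinuousLinearMap.integral_comp_comm Complex.reCLM hint
  simp only [Complex.reCLM_apply] at h4
  rw [← h4]
  congr 1
  funext v
  rw [Complex.mul_re]
  simp only [Complex.ofReal_re, Complex.ofReal_im, mul_zero, sub_zero,
    Complex.exp_ofReal_mul_I_re]
  ring

/- ### Positivity of support measure -/

lemma aux_support_pos {f : ℝ → ℝ}
    (h : ∀ᵐ x ∂(volume.restrict (Set.Ioc (0:ℝ) 1)), x ∈ Function.support f) :
    0 < volume (Function.support f) := by
  by_contra hc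
  have h0 : volume (Function.support f) = 0 := by
    simpa using (le_of_not_gt hc)
  have h1 : ∀ᵐ x ∂(volume : Measure ℝ), x ∉ Function.support f := by
    rw [ae_iff]
    simpa [not_not, Function.support] using h0
  have h2 : ∀ᵐ x ∂(volume.restrict (Set.Ioc (0:ℝ) 1)), x ∉ Function.support f :=
    ae_restrict_of_ae h1
  have h3 : ∀ᵐ x ∂(volume.restrict (Set.Ioc (0:ℝ) 1)), False := by
    filter_upwards [h, h2] with x hx hx'
    exact hx' hx
  rw [ae_iff] at h3
  simp only [not_false_eq_true, Set.setOf_true] at h3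
  rw [Measure.restrict_apply_univ] at h3
  rw [Real.volume_Ioc] at h3
  norm_num at h3

/- ### Integrability lemmas for the kernel -/

section Aux
variable {g : ℝ → ℝ}

lemma aux_H_int (hg_meas : Measurable g) (hg_int : Integrable g) (u : ℝ) :
    Integrable (fun x => g x * (1 - Real.cos (u * x))) := by
  apply Integrable.mono' (hg_int.abs.const_mul 2)
  · exact (hg_meas.mul ((measurable_const.sub
      (Real.measurable_cos.comp (measurable_const.mul measurable_id))))).aestronglyMeasurable
  · filter_upwards with x
    rw [Real.norm_eq_abs, abs_mul]
    have h1 : |1 - Real.cos (u * x)| ≤ 2 := by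
      rw [abs_le]
      constructor <;> nlinarith [Real.cos_le_one (u*x), Real.neg_one_le_cos (u*x)]
    calc |g x| * |1 - Real.cos (u * x)| ≤ |g x| * 2 :=
          mul_le_mul_of_nonneg_left h1 (abs_nonneg _)
      _ = 2 * |g x| := by ring

lemma aux_cos_int (hg_meas : Measurable g) (hg_int : Integrable g) (u : ℝ) :
    Integrable (fun x => g x * Real.cos (u * x)) := by
  apply Integrable.mono' hg_int.abs
  · exact (hg_meas.mul
      (Real.measurable_cos.comp (measurable_const.mul measurable_id))).aestronglyMeasurable
  · filter_upwards with x
    rw [Real.norm_eq_abs, abs_mul]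
    calc |g x| * |Real.cos (u * x)| ≤ |g x| * 1 :=
          mul_le_mul_of_nonneg_left (Real.abs_cos_le_one _) (abs_nonneg _)
      _ = |g x| := mul_one _

lemma aux_H_cont (hg_meas : Measurable g) (hg_int : Integrable g) :
    Continuous (fun u : ℝ => ∫ x, g x * (1 - Real.cos (u * x))) := by
  apply MeasureTheory.continuous_of_dominated (bound := fun x => 2 * |g x|)
  · intro u
    exact (hg_meas.mul ((measurable_const.sub
      (Real.measurable_cos.comp (measurable_const.mul measurable_id))))).aestronglyMeasurable
  · intro u
    filter_upwards with x
    rw [Real.norm_eq_abs, abs_mul]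
    have h1 : |1 - Real.cos (u * x)| ≤ 2 := by
      rw [abs_le]
      constructor <;> nlinarith [Real.cos_le_one (u*x), Real.neg_one_le_cos (u*x)]
    calc |g x| * |1 - Real.cos (u * x)| ≤ |g x| * 2 :=
          mul_le_mul_of_nonneg_left h1 (abs_nonneg _)
      _ = 2 * |g x| := by ring
  · exact hg_int.abs.const_mul 2
  · filter_upwards with x
    fun_prop

end Aux

/-- Euclidean norm of a nonzero integer vector `k ∈ ℤ²`. -/
noncomputable def knorm2 (k : ℤ × ℤ) : ℝ :=
  Real.sqrt ((k.1 : ℝ) ^ 2 + (k.2 : ℝ) ^ 2)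

/-- The 2D Fourier symbol of the nonlocal diffusion operator:
`λ_δ(k) = (4/δ²) ∫₀^{π/2} ∫₀¹ r ρ(r) (1 − cos(r δ |k| cos θ)) dr dθ`. -/
noncomputable def lambdaDelta2 (ρ : ℝ → ℝ) (δ κ : ℝ) : ℝ :=
  (4 / δ ^ 2) * ∫ θ in (0:ℝ)..(π / 2), ∫ r in (0:ℝ)..1,
    r * ρ r * (1 - Real.cos (r * δ * κ * Real.cos θ))

set_option maxHeartbeats 2000000 in
theorem lambdaDelta2_asymptotic_compatibility (ρ : ℝ → ℝ) (hmeas : Measurable ρ)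
    (hpos : ∀ᵐ r ∂(volume.restrict (Set.Ioc (0:ℝ) 1)), 0 < ρ r)
    (hint3 : IntervalIntegrable (fun r => r ^ 3 * ρ r) volume 0 1)
    (hint1 : IntervalIntegrable (fun r => r * ρ r) volume 0 1)
    (hmoment : (∫ r in (0:ℝ)..1, r ^ 3 * ρ r) = 2 / π)
    (rs : ℝ) (hrs : rs ∈ Set.Ioc (0:ℝ) 1)
    (hmonotone : AntitoneOn (fun r => r * ρ r) (Set.Ioc (0:ℝ) rs) ∨
                 MonotoneOn (fun r => r * ρ r) (Set.Ioc (0:ℝ) rs)) :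
    ∃ C : ℝ, 0 < C ∧ ∀ δ : ℝ, 0 < δ → ∀ k : ℤ × ℤ, k ≠ 0 →
      0 < lambdaDelta2 ρ δ (knorm2 k) ∧
      |1 / lambdaDelta2 ρ δ (knorm2 k) - 1 / (knorm2 k) ^ 2| ≤ C * δ ^ 2 := by
  have hπ : (0:ℝ) < π := Real.pi_pos
  set g : ℝ → ℝ := (Set.Ioc (0:ℝ) 1).indicator (fun r => r * ρ r) with hg_def
  have hg_meas : Measurable g := (measurable_id.mul hmeas).indicator measurableSet_Ioc
  have hIoc1 : IntegrableOn (fun r => r * ρ r) (Set.Ioc 0 1) volume :=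
    (intervalIntegrable_iff_integrableOn_Ioc_of_le (by norm_num)).mp hint1
  have hg_int : Integrable g := hIoc1.integrable_indicator measurableSet_Ioc
  have hpos' : ∀ᵐ x ∂(volume : Measure ℝ), x ∈ Set.Ioc (0:ℝ) 1 → 0 < ρ x :=
    (ae_restrict_iff' measurableSet_Ioc).mp hpos
  have hg_nonneg : ∀ᵐ x ∂(volume : Measure ℝ), 0 ≤ g x := by
    filter_upwards [hpos'] with x hx
    by_cases hxs : x ∈ Set.Ioc (0:ℝ) 1
    · rw [hg_def, Set.indicator_of_mem hxs]
      exact (mul_pos hxs.1 (hx hxs)).le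
    · rw [hg_def, Set.indicator_of_notMem hxs]
  -- second and fourth moments
  have hx2g : (fun x => x^2 * g x) = (Set.Ioc (0:ℝ) 1).indicator (fun r => r^3 * ρ r) := by
    funext x
    by_cases hxs : x ∈ Set.Ioc (0:ℝ) 1
    · rw [hg_def, Set.indicator_of_mem hxs, Set.indicator_of_mem hxs]; ring
    · rw [hg_def, Set.indicator_of_notMem hxs, Set.indicator_of_notMem hxs, mul_zero]
  have hIoc3 : IntegrableOn (fun r => r^3 * ρ r) (Set.Ioc 0 1) volume :=
    (intervalIntegrable_iff_integrableOn_Ioc_of_le (by norm_num)).mp hint3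
  have hx2g_int : Integrable (fun x => x^2 * g x) := by
    rw [hx2g]; exact hIoc3.integrable_indicator measurableSet_Ioc
  have hM3 : ∫ x, x^2 * g x = 2/π := by
    rw [hx2g, integral_indicator measurableSet_Ioc,
      ← intervalIntegral.integral_of_le (by norm_num : (0:ℝ) ≤ 1)]
    exact hmoment
  have hx4_le : ∀ᵐ x ∂(volume : Measure ℝ), x^4 * g x ≤ x^2 * g x := by
    filter_upwards [hg_nonneg] with x hx
    by_cases hxs : x ∈ Set.Ioc (0:ℝ) 1
    · have hx2le : x^2 ≤ 1 := by nlinarith [hxs.1.le, hxs.2]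
      have h1 : x^4 ≤ x^2 := by nlinarith [sq_nonneg x, hx2le]
      exact mul_le_mul_of_nonneg_right h1 hx
    · rw [hg_def, Set.indicator_of_notMem hxs, mul_zero, mul_zero]
  have hx4g_nonneg : ∀ᵐ x ∂(volume : Measure ℝ), 0 ≤ x^4 * g x := by
    filter_upwards [hg_nonneg] with x hx
    positivity
  have hx4g_int : Integrable (fun x => x^4 * g x) := by
    apply Integrable.mono' hx2g_int
      ((measurable_id.pow_const 4).mul hg_meas).aestronglyMeasurable
    filter_upwards [hx4_le, hx4g_nonneg] with x h1 h2
    simp only [id_eq, Pi.mul_apply]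
    rw [Real.norm_eq_abs, abs_of_nonneg h2]
    exact h1
  have hM5 : ∫ x, x^4 * g x ≤ 2/π := by
    rw [← hM3]
    exact integral_mono_ae hx4g_int hx2g_int hx4_le
  -- the function H
  set H : ℝ → ℝ := fun u => ∫ x, g x * (1 - Real.cos (u * x)) with hH_def
  have hH_cont : Continuous H := aux_H_cont hg_meas hg_int
  have hH_nonneg : ∀ u, 0 ≤ H u := by
    intro u
    apply integral_nonneg_of_ae
    filter_upwards [hg_nonneg] with x hx
    simp only [Pi.zero_apply]
    have := Real.cos_le_one (u * x)
    nlinarith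
  have hH_le : ∀ u : ℝ, H u ≤ u^2/π := by
    intro u
    have hb : ∀ᵐ x ∂(volume : Measure ℝ),
        g x * (1 - Real.cos (u * x)) ≤ u^2/2 * (x^2 * g x) := by
      filter_upwards [hg_nonneg] with x hx
      have h1 : 1 - Real.cos (u * x) ≤ (u * x)^2/2 := by
        nlinarith [Real.one_sub_sq_div_two_le_cos (x := u * x)]
      calc g x * (1 - Real.cos (u * x)) ≤ g x * ((u * x)^2/2) :=
            mul_le_mul_of_nonneg_left h1 hx
        _ = u^2/2 * (x^2 * g x) := by ring
    have h2 := integral_mono_ae (aux_H_int hg_meas hg_int u)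
      (hx2g_int.const_mul (u^2/2)) hb
    rw [integral_const_mul, hM3] at h2
    have h3 : u^2/2 * (2/π) = u^2/π := by
      field_simp
    linarith
  have hH_ge : ∀ u : ℝ, u^2/π - u^4/(12*π) ≤ H u := by
    intro u
    have hb : ∀ᵐ x ∂(volume : Measure ℝ),
        u^2/2 * (x^2 * g x) - u^4/24 * (x^4 * g x) ≤ g x * (1 - Real.cos (u * x)) := by
      filter_upwards [hg_nonneg] with x hx
      have h1 : (u * x)^2/2 - (u * x)^4/24 ≤ 1 - Real.cos (u * x) := by
        nlinarith [aux_cos_le (u * x)]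
      calc u^2/2 * (x^2 * g x) - u^4/24 * (x^4 * g x)
          = g x * ((u * x)^2/2 - (u * x)^4/24) := by ring
        _ ≤ g x * (1 - Real.cos (u * x)) := mul_le_mul_of_nonneg_left h1 hx
    have hsub_int : Integrable (fun x : ℝ => u^2/2 * (x^2 * g x) - u^4/24 * (x^4 * g x)) volume :=
      (hx2g_int.const_mul (u^2/2)).sub (hx4g_int.const_mul (u^4/24))
    have h2 : (∫ x, (u^2/2 * (x^2 * g x) - u^4/24 * (x^4 * g x))) ≤ H u :=
      integral_mono_ae hsub_int (aux_H_int hg_meas hg_int u) hb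
    rw [integral_sub (hx2g_int.const_mul (u^2/2)) (hx4g_int.const_mul (u^4/24)),
      integral_const_mul, integral_const_mul, hM3] at h2
    have h4 : u^4/24 * (∫ x, x^4 * g x) ≤ u^4/24 * (2/π) := by
      apply mul_le_mul_of_nonneg_left hM5
      positivity
    have h3 : u^2/2 * (2/π) = u^2/π := by field_simp
    have h5 : u^4/24 * (2/π) = u^4/(12*π) := by
      field_simp
      ring
    linarith
  have hH_pos : ∀ u : ℝ, u ≠ 0 → 0 < H u := by
    intro u hu
    rw [hH_def]
    refine (integral_pos_iff_support_of_nonneg_ae ?_ (aux_H_int hg_meas hg_int u)).mpr ?_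
    · filter_upwards [hg_nonneg] with x hx
      simp only [Pi.zero_apply]
      have := Real.cos_le_one (u * x)
      nlinarith
    · apply aux_support_pos
      have hcount : volume {x : ℝ | Real.cos (u * x) = 1} = 0 := by
        have hsub : {x : ℝ | Real.cos (u * x) = 1} ⊆
            Set.range (fun n : ℤ => (n : ℝ) * (2*π) / u) := by
          intro x hx
          rw [Set.mem_setOf_eq, Real.cos_eq_one_iff] at hx
          obtain ⟨n, hn⟩ := hx
          exact ⟨n, by rw [div_eq_iff hu, hn, mul_comm]⟩
        exact measure_mono_null hsub ((Set.countable_range _).measure_zero _)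
      have hae2 : ∀ᵐ x ∂(volume : Measure ℝ), Real.cos (u * x) ≠ 1 := by
        rw [ae_iff]
        simpa [not_not] using hcount
      filter_upwards [ae_restrict_of_ae hpos', ae_restrict_mem measurableSet_Ioc,
        ae_restrict_of_ae hae2] with x h1 h2 h3
      rw [Function.mem_support]
      have hgx : 0 < g x := by
        rw [hg_def, Set.indicator_of_mem h2]
        exact mul_pos h2.1 (h1 h2)
      have hcos : Real.cos (u * x) < 1 := lt_of_le_of_ne (Real.cos_le_one _) h3
      have : 0 < g x * (1 - Real.cos (u * x)) := mul_pos hgx (by linarith)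
      exact ne_of_gt this
  -- limit of H at infinity
  set M : ℝ := ∫ x, g x with hM_def
  have hM_pos : 0 < M := by
    rw [hM_def]
    refine (integral_pos_iff_support_of_nonneg_ae hg_nonneg hg_int).mpr ?_
    apply aux_support_pos
    filter_upwards [ae_restrict_of_ae hpos', ae_restrict_mem measurableSet_Ioc] with x h1 h2
    rw [Function.mem_support, hg_def, Set.indicator_of_mem h2]
    exact ne_of_gt (mul_pos h2.1 (h1 h2))
  have hH_eq : ∀ u, H u = M - ∫ x, g x * Real.cos (u * x) := by
    intro u
    rw [hM_def, ← integral_sub hg_int (aux_cos_int hg_meas hg_int u)]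
    show (∫ x, g x * (1 - Real.cos (u * x))) = _
    congr 1
    funext x
    ring
  have hH_tendsto : Tendsto H atTop (𝓝 M) := by
    have h1 : Tendsto (fun u : ℝ => M - ∫ x, g x * Real.cos (u * x)) atTop (𝓝 (M - 0)) :=
      tendsto_const_nhds.sub (aux_RL g hg_meas hg_int)
    rw [sub_zero] at h1
    exact h1.congr (fun u => (hH_eq u).symm)
  -- uniform positive lower bound of H on [1, ∞)
  obtain ⟨c, hc_pos, hcH⟩ : ∃ c : ℝ, 0 < c ∧ ∀ u : ℝ, 1 ≤ u → c ≤ H u := by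
    have hev : ∀ᶠ u in atTop, M/2 ≤ H u :=
      hH_tendsto.eventually (eventually_ge_nhds (by linarith))
    obtain ⟨U, hU⟩ := eventually_atTop.mp hev
    obtain ⟨u₀, hu₀mem, hu₀min⟩ := isCompact_Icc.exists_isMinOn
      (s := Set.Icc (1:ℝ) (max U 1)) ⟨1, by simp⟩ hH_cont.continuousOn
    refine ⟨min (H u₀) (M/2),
      lt_min (hH_pos u₀ (ne_of_gt (lt_of_lt_of_le zero_lt_one hu₀mem.1))) (by linarith), ?_⟩
    intro u hu
    rcases le_total u (max U 1) with h | h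
    · exact le_trans (min_le_left _ _) (isMinOn_iff.mp hu₀min u ⟨hu, h⟩)
    · exact le_trans (min_le_right _ _) (hU u (le_trans (le_max_left _ _) h))
  -- link with interval integrals
  have hH_ival : ∀ u : ℝ, (∫ r in (0:ℝ)..1, r * ρ r * (1 - Real.cos (u * r))) = H u := by
    intro u
    have e : (fun x => g x * (1 - Real.cos (u * x)))
        = (Set.Ioc (0:ℝ) 1).indicator (fun x => x * ρ x * (1 - Real.cos (u * x))) := by
      funext x
      by_cases hxs : x ∈ Set.Ioc (0:ℝ) 1
      · rw [hg_def, Set.indicator_of_mem hxs, Set.indicator_of_mem hxs]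
      · rw [hg_def, Set.indicator_of_notMem hxs, Set.indicator_of_notMem hxs, zero_mul]
    rw [intervalIntegral.integral_of_le (by norm_num : (0:ℝ) ≤ 1)]
    show _ = ∫ x, g x * (1 - Real.cos (u * x))
    rw [e, integral_indicator measurableSet_Ioc]
  have hHcos_cont : ∀ a : ℝ, Continuous (fun θ : ℝ => H (a * Real.cos θ)) :=
    fun a => hH_cont.comp (continuous_const.mul Real.continuous_cos)
  set F : ℝ → ℝ := fun a => ∫ θ in (0:ℝ)..(π/2), H (a * Real.cos θ) with hF_def
  have hlam : ∀ δ κ : ℝ, lambdaDelta2 ρ δ κ = 4/δ^2 * F (δ * κ) := by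
    intro δ κ
    show (4 / δ ^ 2) * _ = _
    congr 1
    apply intervalIntegral.integral_congr
    intro θ _
    show (∫ r in (0:ℝ)..1, r * ρ r * (1 - Real.cos (r * δ * κ * Real.cos θ)))
      = H (δ * κ * Real.cos θ)
    rw [← hH_ival (δ * κ * Real.cos θ)]
    apply intervalIntegral.integral_congr
    intro r _
    show r * ρ r * (1 - Real.cos (r * δ * κ * Real.cos θ))
      = r * ρ r * (1 - Real.cos (δ * κ * Real.cos θ * r))
    rw [show r * δ * κ * Real.cos θ = δ * κ * Real.cos θ * r from by ring]
  -- integrals of cos powers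
  have hcos2 : ∫ θ in (0:ℝ)..(π/2), Real.cos θ ^ 2 = π/4 := by
    rw [integral_cos_sq]
    simp [Real.cos_pi_div_two, Real.sin_pi_div_two]
    ring
  have hcos4_le : ∫ θ in (0:ℝ)..(π/2), Real.cos θ ^ 4 ≤ π/4 := by
    rw [← hcos2]
    apply intervalIntegral.integral_mono_on (by positivity)
      (Continuous.intervalIntegrable (by fun_prop) _ _)
      (Continuous.intervalIntegrable (by fun_prop) _ _)
    intro θ _
    have h1 : Real.cos θ^2 ≤ 1 := by nlinarith [Real.cos_le_one θ, Real.neg_one_le_cos θ]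
    nlinarith [sq_nonneg (Real.cos θ), h1]
  have hF_le : ∀ a : ℝ, F a ≤ a^2/4 := by
    intro a
    have h1 : F a ≤ ∫ θ in (0:ℝ)..(π/2), a^2/π * Real.cos θ ^ 2 := by
      rw [hF_def]
      apply intervalIntegral.integral_mono_on (by positivity)
        ((hHcos_cont a).intervalIntegrable _ _)
        (Continuous.intervalIntegrable (by fun_prop) _ _)
      intro θ _
      calc H (a * Real.cos θ) ≤ (a * Real.cos θ)^2 / π := hH_le _
        _ = a^2/π * Real.cos θ^2 := by ring
    rw [intervalIntegral.integral_const_mul, hcos2] at h1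
    have h2 : a^2/π * (π/4) = a^2/4 := by field_simp
    linarith
  have hF_ge : ∀ a : ℝ, a^2/4 - a^4/48 ≤ F a := by
    intro a
    have h1 : (∫ θ in (0:ℝ)..(π/2),
        (a^2/π * Real.cos θ^2 - a^4/(12*π) * Real.cos θ^4)) ≤ F a := by
      rw [hF_def]
      apply intervalIntegral.integral_mono_on (by positivity)
        (Continuous.intervalIntegrable (by fun_prop) _ _)
        ((hHcos_cont a).intervalIntegrable _ _)
      intro θ _
      calc a^2/π * Real.cos θ^2 - a^4/(12*π) * Real.cos θ^4
          = (a*Real.cos θ)^2/π - (a*Real.cos θ)^4/(12*π) := by ring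
        _ ≤ H (a * Real.cos θ) := hH_ge _
    rw [intervalIntegral.integral_sub (Continuous.intervalIntegrable (by fun_prop) _ _)
      (Continuous.intervalIntegrable (by fun_prop) _ _),
      intervalIntegral.integral_const_mul, intervalIntegral.integral_const_mul, hcos2] at h1
    have h2 : a^4/(12*π) * (∫ θ in (0:ℝ)..(π/2), Real.cos θ^4) ≤ a^4/(12*π) * (π/4) :=
      mul_le_mul_of_nonneg_left hcos4_le (by positivity)
    have e1 : a^2/π * (π/4) = a^2/4 := by field_simp
    have e2 : a^4/(12*π) * (π/4) = a^4/48 := by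
      field_simp
      ring
    linarith
  have hFbig : ∀ a : ℝ, 2 ≤ a → c * (π/3) ≤ F a := by
    intro a ha
    have hsplit : F a = (∫ θ in (0:ℝ)..(π/3), H (a * Real.cos θ))
        + ∫ θ in (π/3)..(π/2), H (a * Real.cos θ) := by
      rw [hF_def]
      exact (intervalIntegral.integral_add_adjacent_intervals
        ((hHcos_cont a).intervalIntegrable _ _) ((hHcos_cont a).intervalIntegrable _ _)).symm
    have h1 : c * (π/3) ≤ ∫ θ in (0:ℝ)..(π/3), H (a * Real.cos θ) := by
      have h2 : (∫ _θ in (0:ℝ)..(π/3), (c:ℝ)) = c * (π/3) := by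
        rw [intervalIntegral.integral_const]
        simp [smul_eq_mul]
        ring
      rw [← h2]
      apply intervalIntegral.integral_mono_on (by positivity) intervalIntegrable_const
        ((hHcos_cont a).intervalIntegrable _ _)
      intro θ hθ
      apply hcH
      have hcos_ge : (1:ℝ)/2 ≤ Real.cos θ := by
        rw [← Real.cos_pi_div_three]
        exact Real.cos_le_cos_of_nonneg_of_le_pi hθ.1 (by linarith) hθ.2
      nlinarith
    have h3 : 0 ≤ ∫ θ in (π/3)..(π/2), H (a * Real.cos θ) :=
      intervalIntegral.integral_nonneg (by linarith) (fun θ _ => hH_nonneg _)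
    linarith
  -- assemble
  set c1 : ℝ := c * (π/3) with hc1_def
  have hc1 : 0 < c1 := by positivity
  refine ⟨max (1/8) (1/(4*c1)), lt_of_lt_of_le (by norm_num) (le_max_left _ _), ?_⟩
  intro δ hδ k hk
  set κ : ℝ := knorm2 k with hκ_def
  have hκ1 : 1 ≤ κ := by
    have hk2 : (1:ℝ) ≤ (k.1:ℝ)^2 + (k.2:ℝ)^2 := by
      have h1 : (1:ℤ) ≤ k.1^2 + k.2^2 := by
        have hne : k.1 ≠ 0 ∨ k.2 ≠ 0 := by
          by_contra hcon
          push_neg at hcon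
          exact hk (Prod.ext hcon.1 hcon.2)
        rcases hne with h | h
        · nlinarith [Int.one_le_abs h, sq_nonneg k.2, sq_abs k.1, abs_nonneg k.1]
        · nlinarith [Int.one_le_abs h, sq_nonneg k.1, sq_abs k.2, abs_nonneg k.2]
      exact_mod_cast h1
    have h2 := Real.sqrt_le_sqrt hk2
    rw [Real.sqrt_one] at h2
    exact h2
  have hκ0 : 0 < κ := lt_of_lt_of_le zero_lt_one hκ1
  set a : ℝ := δ * κ with ha_def
  have ha : 0 < a := mul_pos hδ hκ0
  have hlameq : lambdaDelta2 ρ δ κ = 4/δ^2 * F a := hlam δ κ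
  have hFpos : 0 < F a := by
    rcases le_total a 2 with h | h
    · have h1 := hF_ge a
      have ha2 : a^2 ≤ 4 := by
        rw [sq]
        calc a * a ≤ 2 * 2 := mul_le_mul h h ha.le (by norm_num)
          _ = 4 := by norm_num
      have ha4 : a^4 ≤ 4*a^2 := by
        calc a^4 = a^2 * a^2 := by ring
          _ ≤ 4 * a^2 := mul_le_mul_of_nonneg_right ha2 (sq_nonneg a)
      linarith [h1, ha4, pow_pos ha 2]
    · linarith [hFbig a h]
  constructor
  · rw [hlameq]
    have h4 : (0:ℝ) < 4/δ^2 := by positivity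
    exact mul_pos h4 hFpos
  · rw [hlameq]
    have h4F : 4 * F a ≤ a^2 := by linarith [hF_le a]
    have hFne : (4 * F a) ≠ 0 := by positivity
    have ha2ne : (a^2 : ℝ) ≠ 0 := by positivity
    have e1 : 1/(4/δ^2 * F a) = δ^2/(4 * F a) := by
      field_simp
    have e2 : 1/κ^2 = δ^2/a^2 := by
      rw [ha_def]
      field_simp
    rw [e1, e2]
    have hone : (1:ℝ)/a^2 ≤ 1/(4 * F a) :=
      one_div_le_one_div_of_le (by positivity) h4F
    have hdiff_nonneg : 0 ≤ δ^2/(4*F a) - δ^2/a^2 := by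
      have h1 : δ^2 * (1/a^2) ≤ δ^2 * (1/(4*F a)) :=
        mul_le_mul_of_nonneg_left hone (sq_nonneg δ)
      have e3 : δ^2 * (1/a^2) = δ^2/a^2 := by ring
      have e4 : δ^2 * (1/(4*F a)) = δ^2/(4*F a) := by ring
      linarith [e3 ▸ e4 ▸ h1]
    rw [abs_of_nonneg hdiff_nonneg]
    rcases le_total a 2 with hsm | hbg
    · have hFg := hF_ge a
      have ha2 : a^2 ≤ 4 := by
        rw [sq]
        calc a * a ≤ 2 * 2 := mul_le_mul hsm hsm ha.le (by norm_num)
          _ = 4 := by norm_num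
      have ha4 : a^4 ≤ 4*a^2 := by
        calc a^4 = a^2 * a^2 := by ring
          _ ≤ 4 * a^2 := mul_le_mul_of_nonneg_right ha2 (sq_nonneg a)
      have hF6 : a^2/6 ≤ F a := by linarith
      have hub : 1/(4*F a) - 1/a^2 ≤ 1/8 := by
        rw [div_sub_div _ _ hFne ha2ne, div_le_iff₀ (by positivity)]
        have hkey : a^2/6 * a^2 ≤ F a * a^2 :=
          mul_le_mul_of_nonneg_right hF6 (sq_nonneg a)
        have ha4' : a^2 * a^2 = a^4 := by ring
        linarith [hkey, hFg, ha4]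
      calc δ^2/(4*F a) - δ^2/a^2 = δ^2 * (1/(4*F a) - 1/a^2) := by ring
        _ ≤ δ^2 * (1/8) := mul_le_mul_of_nonneg_left hub (sq_nonneg δ)
        _ = 1/8 * δ^2 := by ring
        _ ≤ max (1/8) (1/(4*c1)) * δ^2 :=
            mul_le_mul_of_nonneg_right (le_max_left _ _) (sq_nonneg δ)
    · have hFc : c1 ≤ F a := hFbig a hbg
      have hone2 : (1:ℝ)/(4*F a) ≤ 1/(4*c1) :=
        one_div_le_one_div_of_le (by positivity) (by linarith)
      have h2 : 0 ≤ δ^2/a^2 := by positivity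
      have h1 : δ^2/(4*F a) ≤ δ^2/(4*c1) := by
        have := mul_le_mul_of_nonneg_left hone2 (sq_nonneg δ)
        calc δ^2/(4*F a) = δ^2 * (1/(4*F a)) := by ring
          _ ≤ δ^2 * (1/(4*c1)) := this
          _ = δ^2/(4*c1) := by ring
      calc δ^2/(4*F a) - δ^2/a^2 ≤ δ^2/(4*c1) := by linarith
        _ = 1/(4*c1) * δ^2 := by ring
        _ ≤ max (1/8) (1/(4*c1)) * δ^2 :=
            mul_le_mul_of_nonneg_right (le_max_right _ _) (sq_nonneg δ)
end

section
/- Let ρ : (0,1] → ℝ be a measurable function with ρ(r) > 0 for almost every r ∈ (0,1], such that r ↦ r³ρ(r) and r ↦ r ρ(r) are integrable on (0,1) and the second-moment normalization ∫₀¹ r³ρ(r) dr = 2/π holds, and suppose there is r* ∈ (0,1] such that the map r ↦ r ρ(r) is monotone on (0, r*]. Then there exists a constant C > 0, independent of δ and k, such that for every δ > 0 and every k ∈ ℤ² \ {0}, 0 < 1/λ_δ(k) ≤ C δ² + 1/|k|² ≤ C δ² + 1. (This is the Fourier-symbol form of the uniform bound ‖L_{δ,h}^{−1}‖ ≤ C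 δ² + A on the inverse of the discrete nonlocal operator.) -/
set_option maxHeartbeats 4000000

open Real MeasureTheory Filter Set Topology

private lemma rl_cos (G : ℝ → ℝ) (hG : Integrable G) :
    Tendsto (fun b : ℝ => ∫ v, G v * Real.cos (b * v)) atTop (𝓝 (0:ℝ)) := by
  have h0 : Tendsto (fun w : ℝ => ∫ v : ℝ, Real.fourierChar (-(v * w)) • ((G v : ℂ)))
      (cocompact ℝ) (𝓝 0) := Real.tendsto_integral_exp_smul_cocompact (fun v => (G v : ℂ))
  have h1 : Tendsto (fun b : ℝ => b / (2 * π)) atTop (cocompact ℝ) := by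
    refine Tendsto.mono_right (tendsto_id.atTop_div_const (by positivity)) ?_
    rw [cocompact_eq_atBot_atTop]; exact le_sup_right
  have h2 := h0.comp h1
  have h3 := (Complex.continuous_re.tendsto 0).comp h2
  simp only [Complex.zero_re] at h3
  convert h3 using 2 with b
  have hint : Integrable (fun v : ℝ => Real.fourierChar (-(v * (b / (2*π)))) • ((G v : ℂ))) := by
    exact (Real.fourierIntegral_convergent_iff' (ContinuousLinearMap.mul ℝ ℝ) (b/(2*π))).2 hG.ofReal
  have hre := integral_re hint
  simp only [RCLike.re_to_complex] at hre
  rw [Function.comp_apply, Function.comp_apply, ← hre]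
  refine integral_congr_ae (Eventually.of_forall fun v => ?_)
  have h4 : (2 * π * -(v * (b / (2 * π))) : ℝ) = -(b * v) := by field_simp
  simp only [Circle.smul_def, Real.fourierChar_apply, h4, smul_eq_mul]
  rw [show ((↑(-(b * v)) : ℂ) * Complex.I) = ((-(b*v) : ℝ) : ℂ) * Complex.I from rfl,
      Complex.mul_re, Complex.exp_ofReal_mul_I_re]
  simp [Real.cos_neg, mul_comm]

private noncomputable def nlI (ρ : ℝ → ℝ) (b : ℝ) : ℝ :=
  ∫ r in (0:ℝ)..1, r * ρ r * (1 - Real.cos (b * r))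

private lemma nlg_meas (ρ : ℝ → ℝ) (hmeas : Measurable ρ) :
    Measurable (fun r : ℝ => r * ρ r) := measurable_id.mul hmeas

private lemma nlg_intOn (ρ : ℝ → ℝ)
    (hint1 : IntervalIntegrable (fun r => r * ρ r) volume 0 1) :
    IntegrableOn (fun r : ℝ => r * ρ r) (Set.Ioc 0 1) volume :=
  (intervalIntegrable_iff_integrableOn_Ioc_of_le (by norm_num)).mp hint1

private lemma nlg_pos_ae (ρ : ℝ → ℝ)
    (hpos : ∀ᵐ r ∂(volume.restrict (Set.Ioc (0:ℝ) 1)), 0 < ρ r) :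
    ∀ᵐ r ∂(volume.restrict (Set.Ioc (0:ℝ) 1)), 0 < r * ρ r := by
  filter_upwards [hpos, ae_restrict_mem measurableSet_Ioc] with r h1 h2
  exact mul_pos h2.1 h1

private lemma nlI_msble (ρ : ℝ → ℝ) (hmeas : Measurable ρ) (b : ℝ) :
    Measurable (fun r : ℝ => r * ρ r * (1 - Real.cos (b * r))) :=
  (nlg_meas ρ hmeas).mul
    ((measurable_const.sub (Real.measurable_cos.comp (measurable_const.mul measurable_id))) :
      Measurable (fun r : ℝ => 1 - Real.cos (b * r)))

private lemma nl_norm_bound (ρ : ℝ → ℝ) (b r : ℝ) :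
    ‖r * ρ r * (1 - Real.cos (b * r))‖ ≤ 2 * ‖r * ρ r‖ := by
  have h1 : |1 - Real.cos (b * r)| ≤ 2 := by
    have := Real.neg_one_le_cos (b * r)
    have := Real.cos_le_one (b * r)
    rw [abs_le]; constructor <;> linarith
  calc ‖r * ρ r * (1 - Real.cos (b * r))‖ = |r * ρ r| * |1 - Real.cos (b * r)| := abs_mul _ _
    _ ≤ |r * ρ r| * 2 := by gcongr
    _ = 2 * ‖r * ρ r‖ := by rw [mul_comm]; rfl

private lemma nlI_integrand_intOn (ρ : ℝ → ℝ) (hmeas : Measurable ρ)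
    (hint1 : IntervalIntegrable (fun r => r * ρ r) volume 0 1) (b : ℝ) :
    IntegrableOn (fun r => r * ρ r * (1 - Real.cos (b * r))) (Set.Ioc 0 1) volume := by
  refine Integrable.mono' ((nlg_intOn ρ hint1).norm.const_mul 2)
    (nlI_msble ρ hmeas b).aestronglyMeasurable ?_
  exact Eventually.of_forall fun r => nl_norm_bound ρ b r

private lemma nlI_integrand_ii (ρ : ℝ → ℝ) (hmeas : Measurable ρ)
    (hint1 : IntervalIntegrable (fun r => r * ρ r) volume 0 1) (b : ℝ) :
    IntervalIntegrable (fun r => r * ρ r * (1 - Real.cos (b * r))) volume 0 1 :=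
  (intervalIntegrable_iff_integrableOn_Ioc_of_le (by norm_num)).mpr
    (nlI_integrand_intOn ρ hmeas hint1 b)

private lemma nlI_nonneg (ρ : ℝ → ℝ)
    (hpos : ∀ᵐ r ∂(volume.restrict (Set.Ioc (0:ℝ) 1)), 0 < ρ r) (b : ℝ) :
    0 ≤ nlI ρ b := by
  rw [nlI, intervalIntegral.integral_of_le (by norm_num : (0:ℝ) ≤ 1)]
  refine integral_nonneg_of_ae ?_
  filter_upwards [nlg_pos_ae ρ hpos] with r h1
  have := Real.cos_le_one (b * r)
  show (0:ℝ) ≤ r * ρ r * (1 - Real.cos (b * r))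
  nlinarith

private lemma nlI_continuous (ρ : ℝ → ℝ) (hmeas : Measurable ρ)
    (hint1 : IntervalIntegrable (fun r => r * ρ r) volume 0 1) :
    Continuous (nlI ρ) := by
  refine intervalIntegral.continuous_of_dominated_interval
    (F := fun b r => r * ρ r * (1 - Real.cos (b * r))) (bound := fun r => 2 * ‖r * ρ r‖)
    (fun b => (nlI_msble ρ hmeas b).aestronglyMeasurable)
    (fun b => Eventually.of_forall fun r _ => nl_norm_bound ρ b r)
    (hint1.norm.const_mul 2) ?_
  refine Eventually.of_forall fun r _ => ?_
  exact continuous_const.mul (continuous_const.sub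
    (Real.continuous_cos.comp (continuous_id.mul continuous_const)))

private lemma nlG_pos (ρ : ℝ → ℝ)
    (hpos : ∀ᵐ r ∂(volume.restrict (Set.Ioc (0:ℝ) 1)), 0 < ρ r)
    (hint1 : IntervalIntegrable (fun r => r * ρ r) volume 0 1) :
    0 < ∫ r in (0:ℝ)..1, r * ρ r := by
  rw [intervalIntegral.integral_of_le (by norm_num : (0:ℝ) ≤ 1)]
  have hnn : 0 ≤ᵐ[volume.restrict (Set.Ioc (0:ℝ) 1)] fun r => r * ρ r :=
    (nlg_pos_ae ρ hpos).mono fun r h => h.le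
  rcases lt_or_eq_of_le (integral_nonneg_of_ae hnn) with h | h
  · exact h
  · exfalso
    have hz := (integral_eq_zero_iff_of_nonneg_ae hnn (nlg_intOn ρ hint1)).mp h.symm
    have hff : ∀ᵐ r ∂(volume.restrict (Set.Ioc (0:ℝ) 1)), False := by
      filter_upwards [hz, nlg_pos_ae ρ hpos] with r h1 h2
      exact absurd h1 (ne_of_gt h2)
    have := ae_iff.mp hff
    simp [Measure.restrict_apply, Real.volume_Ioc] at this

private lemma nlI_pos (ρ : ℝ → ℝ) (hmeas : Measurable ρ)
    (hpos : ∀ᵐ r ∂(volume.restrict (Set.Ioc (0:ℝ) 1)), 0 < ρ r)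
    (hint1 : IntervalIntegrable (fun r => r * ρ r) volume 0 1)
    {b : ℝ} (hb : 0 < b) : 0 < nlI ρ b := by
  rw [nlI, intervalIntegral.integral_of_le (by norm_num : (0:ℝ) ≤ 1)]
  have hcos : ∀ᵐ r ∂(volume.restrict (Set.Ioc (0:ℝ) 1)), Real.cos (b * r) ≠ 1 := by
    refine ae_restrict_of_ae ?_
    have hnull : volume {r : ℝ | Real.cos (b * r) = 1} = 0 := by
      have hsub : {r : ℝ | Real.cos (b * r) = 1} ⊆
          Set.range (fun n : ℤ => (n : ℝ) * (2 * π) / b) := by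
        intro r hr
        obtain ⟨n, hn⟩ := (Real.cos_eq_one_iff (b * r)).mp hr
        refine ⟨n, ?_⟩
        field_simp
        linarith [hn]
      exact measure_mono_null hsub ((Set.countable_range _).measure_zero volume)
    exact (ae_iff).mpr (by simpa using hnull)
  have hnn : 0 ≤ᵐ[volume.restrict (Set.Ioc (0:ℝ) 1)]
      fun r => r * ρ r * (1 - Real.cos (b * r)) := by
    filter_upwards [nlg_pos_ae ρ hpos] with r h1
    have := Real.cos_le_one (b * r)
    show (0:ℝ) ≤ r * ρ r * (1 - Real.cos (b * r))
    nlinarith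
  rcases lt_or_eq_of_le (integral_nonneg_of_ae hnn) with h | h
  · exact h
  · exfalso
    have hz := (integral_eq_zero_iff_of_nonneg_ae hnn
      (nlI_integrand_intOn ρ hmeas hint1 b)).mp h.symm
    have hff : ∀ᵐ r ∂(volume.restrict (Set.Ioc (0:ℝ) 1)), False := by
      filter_upwards [hz, nlg_pos_ae ρ hpos, hcos] with r h1 h2 h3
      rcases mul_eq_zero.mp h1 with h | h
      · exact absurd h (ne_of_gt h2)
      · exact h3 (by linarith)
    have := ae_iff.mp hff
    simp [Measure.restrict_apply, Real.volume_Ioc] at this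

private lemma nlI_tendsto (ρ : ℝ → ℝ) (hmeas : Measurable ρ)
    (hint1 : IntervalIntegrable (fun r => r * ρ r) volume 0 1) :
    Tendsto (nlI ρ) atTop (𝓝 (∫ r in (0:ℝ)..1, r * ρ r)) := by
  classical
  set G : ℝ → ℝ := (Set.Ioc (0:ℝ) 1).indicator (fun r => r * ρ r) with hG
  have hGint : Integrable G volume :=
    (integrable_indicator_iff measurableSet_Ioc).mpr (nlg_intOn ρ hint1)
  have hrl := rl_cos G hGint
  have hJ : ∀ b : ℝ, (∫ v, G v * Real.cos (b * v)) =
      ∫ r in Set.Ioc (0:ℝ) 1, r * ρ r * Real.cos (b * r) := by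
    intro b
    rw [← integral_indicator measurableSet_Ioc]
    congr 1
    ext v
    by_cases hv : v ∈ Set.Ioc (0:ℝ) 1 <;> simp [hG, Set.indicator_apply, hv]
  have hsplit : ∀ b : ℝ, nlI ρ b = (∫ r in (0:ℝ)..1, r * ρ r) - ∫ v, G v * Real.cos (b * v) := by
    intro b
    rw [hJ b, nlI, intervalIntegral.integral_of_le (by norm_num : (0:ℝ) ≤ 1),
      intervalIntegral.integral_of_le (by norm_num : (0:ℝ) ≤ 1)]
    have hcosint : IntegrableOn (fun r => r * ρ r * Real.cos (b * r)) (Set.Ioc 0 1) volume := by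
      refine Integrable.mono' (nlg_intOn ρ hint1).norm
        (((nlg_meas ρ hmeas).mul
          (Real.measurable_cos.comp (measurable_const.mul measurable_id))).aestronglyMeasurable) ?_
      refine Eventually.of_forall fun r => ?_
      calc ‖r * ρ r * Real.cos (b * r)‖ = |r * ρ r| * |Real.cos (b * r)| := abs_mul _ _
        _ ≤ |r * ρ r| * 1 := by gcongr; exact Real.abs_cos_le_one _
        _ = ‖r * ρ r‖ := by rw [mul_one]; rfl
    rw [← integral_sub (nlg_intOn ρ hint1) hcosint]
    congr 1; ext r; ring
  have heq : (nlI ρ) = fun b => (∫ r in (0:ℝ)..1, r * ρ r) - ∫ v, G v * Real.cos (b * v) :=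
    funext hsplit
  rw [heq]
  simpa using tendsto_const_nhds.sub hrl

private lemma nl_int5 (ρ : ℝ → ℝ) (hmeas : Measurable ρ)
    (hint3 : IntervalIntegrable (fun r => r ^ 3 * ρ r) volume 0 1) :
    IntervalIntegrable (fun r => r ^ 5 * ρ r) volume 0 1 := by
  rw [intervalIntegrable_iff_integrableOn_Ioc_of_le (by norm_num)] at hint3 ⊢
  refine Integrable.mono' hint3.norm
    ((measurable_id.pow_const 5).mul hmeas).aestronglyMeasurable ?_
  filter_upwards [ae_restrict_mem measurableSet_Ioc] with r hr
  have h0 : (0:ℝ) < r := hr.1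
  have h1 : r ≤ 1 := hr.2
  have h5 : r ^ 5 ≤ r ^ 3 := pow_le_pow_of_le_one h0.le h1 (by norm_num)
  calc ‖r ^ 5 * ρ r‖ = r ^ 5 * |ρ r| := by
        rw [show ‖r ^ 5 * ρ r‖ = |r ^ 5 * ρ r| from rfl, abs_mul, abs_of_pos (pow_pos h0 5)]
    _ ≤ r ^ 3 * |ρ r| := by gcongr
    _ = ‖r ^ 3 * ρ r‖ := by
        rw [show ‖r ^ 3 * ρ r‖ = |r ^ 3 * ρ r| from rfl, abs_mul, abs_of_pos (pow_pos h0 3)]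

private lemma nlI_lb (ρ : ℝ → ℝ) (hmeas : Measurable ρ)
    (hpos : ∀ᵐ r ∂(volume.restrict (Set.Ioc (0:ℝ) 1)), 0 < ρ r)
    (hint3 : IntervalIntegrable (fun r => r ^ 3 * ρ r) volume 0 1)
    (hint1 : IntervalIntegrable (fun r => r * ρ r) volume 0 1)
    {b : ℝ} (hb0 : 0 ≤ b) (hb1 : b ≤ 1) :
    b ^ 2 / 2 * (∫ r in (0:ℝ)..1, r ^ 3 * ρ r)
      - 5 / 96 * b ^ 4 * (∫ r in (0:ℝ)..1, r ^ 5 * ρ r) ≤ nlI ρ b := by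
  have hint5 := nl_int5 ρ hmeas hint3
  have hIcc : volume.restrict (Set.Icc (0:ℝ) 1) = volume.restrict (Set.Ioc (0:ℝ) 1) :=
    (Measure.restrict_congr_set Ioc_ae_eq_Icc).symm
  have key : (fun r => b ^ 2 / 2 * (r ^ 3 * ρ r) - 5 / 96 * b ^ 4 * (r ^ 5 * ρ r))
      ≤ᵐ[volume.restrict (Set.Icc (0:ℝ) 1)] fun r => r * ρ r * (1 - Real.cos (b * r)) := by
    rw [hIcc]
    filter_upwards [hpos, ae_restrict_mem measurableSet_Ioc] with r hρ hr
    have hr0 : (0:ℝ) ≤ r := hr.1.le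
    have hr1 : r ≤ 1 := hr.2
    have hx : |b * r| ≤ 1 := by
      rw [abs_of_nonneg (by positivity)]
      calc b * r ≤ 1 * 1 := by gcongr
        _ = 1 := by norm_num
    have hcb := Real.cos_bound hx
    rw [abs_le] at hcb
    have h2 : 1 - Real.cos (b * r) ≥ (b * r) ^ 2 / 2 - 5 / 96 * (b * r) ^ 4 := by
      have := hcb.2
      have habs : |b * r| ^ 4 = (b * r) ^ 4 := by rw [← abs_pow, abs_of_nonneg (by positivity)]
      rw [habs] at this
      linarith
    have h3 : 0 ≤ r * ρ r := mul_nonneg hr0 hρ.le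
    have h4 := mul_le_mul_of_nonneg_left h2 h3
    calc b ^ 2 / 2 * (r ^ 3 * ρ r) - 5 / 96 * b ^ 4 * (r ^ 5 * ρ r)
        = r * ρ r * ((b * r) ^ 2 / 2 - 5 / 96 * (b * r) ^ 4) := by ring
      _ ≤ r * ρ r * (1 - Real.cos (b * r)) := h4
  have hlhs : IntervalIntegrable
      (fun r => b ^ 2 / 2 * (r ^ 3 * ρ r) - 5 / 96 * b ^ 4 * (r ^ 5 * ρ r)) volume 0 1 :=
    (hint3.const_mul _).sub (hint5.const_mul _)
  have := intervalIntegral.integral_mono_ae_restrict (by norm_num : (0:ℝ) ≤ 1) hlhs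
    (nlI_integrand_ii ρ hmeas hint1 b) key
  rw [intervalIntegral.integral_sub (hint3.const_mul _) (hint5.const_mul _),
    intervalIntegral.integral_const_mul, intervalIntegral.integral_const_mul] at this
  exact this
theorem lambdaDelta2_inverse_uniform_bound (ρ : ℝ → ℝ) (hmeas : Measurable ρ)
    (hpos : ∀ᵐ r ∂(volume.restrict (Set.Ioc (0:ℝ) 1)), 0 < ρ r)
    (hint3 : IntervalIntegrable (fun r => r ^ 3 * ρ r) volume 0 1)
    (hint1 : IntervalIntegrable (fun r => r * ρ r) volume 0 1)
    (hmoment : (∫ r in (0:ℝ)..1, r ^ 3 * ρ r) = 2 / π)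
    (rs : ℝ) (hrs : rs ∈ Set.Ioc (0:ℝ) 1)
    (hmonotone : AntitoneOn (fun r => r * ρ r) (Set.Ioc (0:ℝ) rs) ∨
                 MonotoneOn (fun r => r * ρ r) (Set.Ioc (0:ℝ) rs)) :
    ∃ C : ℝ, 0 < C ∧ ∀ δ : ℝ, 0 < δ → ∀ k : ℤ × ℤ, k ≠ 0 →
      0 < 1 / lambdaDelta2 ρ δ (knorm2 k) ∧
      1 / lambdaDelta2 ρ δ (knorm2 k) ≤ C * δ ^ 2 + 1 / (knorm2 k) ^ 2 ∧
      C * δ ^ 2 + 1 / (knorm2 k) ^ 2 ≤ C * δ ^ 2 + 1 := by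
  have hπ := Real.pi_pos
  have hint5 := nl_int5 ρ hmeas hint3
  obtain ⟨M4, hM4def⟩ : ∃ x : ℝ, x = ∫ r in (0:ℝ)..1, r ^ 5 * ρ r := ⟨_, rfl⟩
  have hIoc3 := (intervalIntegrable_iff_integrableOn_Ioc_of_le (by norm_num : (0:ℝ) ≤ 1)).mp hint3
  have hIoc5 := (intervalIntegrable_iff_integrableOn_Ioc_of_le (by norm_num : (0:ℝ) ≤ 1)).mp hint5
  have hM4nn : 0 ≤ M4 := by
    rw [hM4def, intervalIntegral.integral_of_le (by norm_num : (0:ℝ) ≤ 1)]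
    refine integral_nonneg_of_ae ?_
    filter_upwards [hpos, ae_restrict_mem measurableSet_Ioc] with r h1 h2
    have h0 : (0:ℝ) < r := h2.1
    positivity
  have hM4le : M4 ≤ 2 / π := by
    rw [← hmoment, hM4def, intervalIntegral.integral_of_le (by norm_num : (0:ℝ) ≤ 1),
      intervalIntegral.integral_of_le (by norm_num : (0:ℝ) ≤ 1)]
    refine integral_mono_ae hIoc5 hIoc3 ?_
    filter_upwards [hpos, ae_restrict_mem measurableSet_Ioc] with r h1 h2
    have h0 : (0:ℝ) < r := h2.1
    have h5 : r ^ 5 ≤ r ^ 3 := pow_le_pow_of_le_one h0.le h2.2 (by norm_num)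
    exact mul_le_mul_of_nonneg_right h5 h1.le
  have hcont := nlI_continuous ρ hmeas hint1
  have hGpos := nlG_pos ρ hpos hint1
  obtain ⟨Gv, hGvdef⟩ : ∃ x : ℝ, x = ∫ r in (0:ℝ)..1, r * ρ r := ⟨_, rfl⟩
  rw [← hGvdef] at hGpos
  have htd := nlI_tendsto ρ hmeas hint1
  rw [← hGvdef] at htd
  obtain ⟨B, hB⟩ : ∃ B : ℝ, ∀ b ≥ B, Gv / 2 < nlI ρ b :=
    eventually_atTop.mp (htd.eventually (eventually_gt_nhds (by linarith : Gv / 2 < Gv)))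
  obtain ⟨Bc, hBcdef⟩ : ∃ x : ℝ, x = max B 1 := ⟨_, rfl⟩
  have hBc12 : (1/2 : ℝ) ≤ Bc := hBcdef ▸ le_trans (by norm_num) (le_max_right B 1)
  obtain ⟨x0, hx0mem, hx0min⟩ :=
    isCompact_Icc.exists_isMinOn (nonempty_Icc.mpr hBc12)
      (hcont.continuousOn : ContinuousOn (nlI ρ) (Set.Icc (1/2 : ℝ) Bc))
  obtain ⟨c1, hc1def⟩ : ∃ x : ℝ, x = min (nlI ρ x0) (Gv / 2) := ⟨_, rfl⟩
  have hx0pos : (0:ℝ) < x0 := lt_of_lt_of_le (by norm_num) hx0mem.1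
  have hc1pos : 0 < c1 := hc1def ▸ lt_min (nlI_pos ρ hmeas hpos hint1 hx0pos) (by linarith)
  have hc1lb : ∀ b : ℝ, 1/2 ≤ b → c1 ≤ nlI ρ b := by
    intro b hb
    rcases le_or_gt b Bc with h | h
    · exact le_trans (hc1def ▸ min_le_left _ _) (isMinOn_iff.mp hx0min b ⟨hb, h⟩)
    · refine le_trans (hc1def ▸ min_le_right _ _) (hB b ?_).le
      rw [hBcdef] at h
      exact (le_of_lt (lt_of_le_of_lt (le_max_left B 1) h))
  obtain ⟨C, hCdef⟩ : ∃ x : ℝ, x = max 1 (3 / (4 * π * c1)) := ⟨_, rfl⟩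
  have hC1 : (1:ℝ) ≤ C := hCdef ▸ le_max_left _ _
  have hC2 : 3 / (4 * π * c1) ≤ C := hCdef ▸ le_max_right _ _
  refine ⟨C, lt_of_lt_of_le one_pos hC1, ?_⟩
  intro δ hδ k hk
  obtain ⟨κ, hκdef⟩ : ∃ x : ℝ, x = knorm2 k := ⟨_, rfl⟩
  rw [← hκdef]
  have hκ1 : (1:ℝ) ≤ κ := by
    have hne : k.1 ≠ 0 ∨ k.2 ≠ 0 := by
      by_contra h; push_neg at h; exact hk (Prod.ext h.1 h.2)
    have hsq : (1:ℝ) ≤ (k.1 : ℝ) ^ 2 + (k.2 : ℝ) ^ 2 := by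
      rcases hne with h | h
      · have h1 : (1:ℤ) ≤ |k.1| := Int.one_le_abs h
        have h2 : (1:ℝ) ≤ |(k.1:ℝ)| := by exact_mod_cast (by exact_mod_cast h1 : (1:ℝ) ≤ |k.1|)
        nlinarith [sq_abs (k.1:ℝ), sq_nonneg (k.2:ℝ)]
      · have h1 : (1:ℤ) ≤ |k.2| := Int.one_le_abs h
        have h2 : (1:ℝ) ≤ |(k.2:ℝ)| := by exact_mod_cast (by exact_mod_cast h1 : (1:ℝ) ≤ |k.2|)
        nlinarith [sq_abs (k.2:ℝ), sq_nonneg (k.1:ℝ)]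
    calc (1:ℝ) = Real.sqrt 1 := Real.sqrt_one.symm
      _ ≤ Real.sqrt ((k.1 : ℝ) ^ 2 + (k.2 : ℝ) ^ 2) := Real.sqrt_le_sqrt hsq
      _ = κ := by rw [hκdef, knorm2]
  have hκpos : (0:ℝ) < κ := lt_of_lt_of_le one_pos hκ1
  have hκ2pos : (0:ℝ) < κ ^ 2 := by positivity
  have hδ2pos : (0:ℝ) < δ ^ 2 := by positivity
  have hlameq : lambdaDelta2 ρ δ κ
      = 4 / δ ^ 2 * ∫ θ in (0:ℝ)..(π/2), nlI ρ (δ * κ * Real.cos θ) := by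
    rw [lambdaDelta2]
    skip
    congr 1
    refine intervalIntegral.integral_congr fun θ _ => ?_
    rw [nlI]
    refine intervalIntegral.integral_congr fun r _ => ?_
    have h : r * δ * κ * Real.cos θ = δ * κ * Real.cos θ * r := by ring
    rw [h]
  obtain ⟨Fs, hFsdef⟩ : ∃ x : ℝ, x = ∫ θ in (0:ℝ)..(π/2), nlI ρ (δ * κ * Real.cos θ) := ⟨_, rfl⟩
  rw [← hFsdef] at hlameq
  have hθcont : Continuous fun θ : ℝ => nlI ρ (δ * κ * Real.cos θ) :=
    hcont.comp (continuous_const.mul Real.continuous_cos)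
  have hG3 : C * δ ^ 2 + 1 / κ ^ 2 ≤ C * δ ^ 2 + 1 := by
    have : 1 / κ ^ 2 ≤ 1 := by
      rw [div_le_one hκ2pos]; nlinarith
    linarith
  rcases le_or_gt (δ * κ) 1 with hs | hs
  · -- small case
    have hs0 : (0:ℝ) ≤ δ * κ := by positivity
    obtain ⟨K, hKdef⟩ : ∃ x : ℝ, x = (δ*κ)^2/2 * (2/π) - 5/96*(δ*κ)^4*M4 := ⟨_, rfl⟩
    have hθlb : ∀ θ ∈ Set.Icc (0:ℝ) (π/2), K * Real.cos θ ^ 2 ≤ nlI ρ (δ * κ * Real.cos θ) := by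
      intro θ hθ
      have hc0 : 0 ≤ Real.cos θ := Real.cos_nonneg_of_mem_Icc ⟨by linarith [hθ.1], hθ.2⟩
      have hcle : Real.cos θ ≤ 1 := Real.cos_le_one θ
      have hb0 : 0 ≤ δ * κ * Real.cos θ := by positivity
      have hb1 : δ * κ * Real.cos θ ≤ 1 := by nlinarith
      have hlb := nlI_lb ρ hmeas hpos hint3 hint1 hb0 hb1
      rw [hmoment, ← hM4def] at hlb
      refine le_trans ?_ hlb
      have hcos2 : Real.cos θ ^ 2 ≤ 1 := by nlinarith
      have hkey : 0 ≤ 5/96*(δ*κ)^4*M4*(Real.cos θ ^ 2 * (1 - Real.cos θ ^ 2)) := by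
        have h1 : 0 ≤ (δ*κ)^4 := by positivity
        have h2 : 0 ≤ Real.cos θ ^ 2 * (1 - Real.cos θ ^ 2) :=
          mul_nonneg (sq_nonneg _) (by linarith)
        positivity
      have hexp : (δ*κ*Real.cos θ)^2/2*(2/π) - 5/96*(δ*κ*Real.cos θ)^4*M4
          - K * Real.cos θ ^ 2
          = 5/96*(δ*κ)^4*M4*(Real.cos θ ^ 2 * (1 - Real.cos θ ^ 2)) := by
        rw [hKdef]; ring
      linarith [hexp ▸ hkey]
    have h1 : (∫ θ in (0:ℝ)..(π/2), K * Real.cos θ ^ 2) ≤ Fs := by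
      rw [hFsdef]
      refine intervalIntegral.integral_mono_on (by positivity)
        ((continuous_const.mul (Real.continuous_cos.pow 2)).intervalIntegrable _ _)
        (hθcont.intervalIntegrable _ _) hθlb
    have h2 : (∫ θ in (0:ℝ)..(π/2), K * Real.cos θ ^ 2) = K * (π/4) := by
      rw [intervalIntegral.integral_const_mul, integral_cos_sq, Real.cos_pi_div_two,
        Real.sin_zero]
      ring
    have hFs : K * (π/4) ≤ Fs := h2 ▸ h1
    have heq : 4 / δ ^ 2 * (K * (π/4)) = κ^2 - 5*π/96*δ^2*κ^4*M4 := by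
      rw [hKdef]; field_simp
    have hlamlb : κ^2 - 5/48*δ^2*κ^4*1 ≤ lambdaDelta2 ρ δ κ := by
      rw [hlameq]
      have hstep : 4 / δ ^ 2 * (K * (π/4)) ≤ 4 / δ ^ 2 * Fs := by
        have h40 : (0:ℝ) ≤ 4 / δ ^ 2 := by positivity
        exact mul_le_mul_of_nonneg_left hFs h40
      rw [heq] at hstep
      have hπM4 : π * M4 ≤ 2 := by
        have := (le_div_iff₀ hπ).mp hM4le
        linarith
      have ht : (0:ℝ) ≤ δ^2*κ^4 := by positivity
      nlinarith [mul_le_mul_of_nonneg_left hπM4 ht]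
    have hlampos : 0 < lambdaDelta2 ρ δ κ := by
      have hh := mul_le_mul hs hs hs0 (by norm_num : (0:ℝ) ≤ 1)
      have hδκ2 : δ^2*κ^4 ≤ κ^2 := by nlinarith [mul_le_mul_of_nonneg_right hh hκ2pos.le]
      nlinarith
    refine ⟨by positivity, ?_, hG3⟩
    rw [div_le_iff₀ hlampos]
    have hu : (1/κ^2) * κ^2 = 1 := by field_simp
    have hupos : 0 < 1/κ^2 := by positivity
    have step3 : 1 ≤ (δ^2 + 1/κ^2) * (κ^2 - 5/48*δ^2*κ^4*1) := by
      have hδκ2 : δ^2*κ^2 ≤ 1 := by nlinarith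
      have h4 : δ^4*κ^4 ≤ δ^2*κ^2 := by nlinarith
      have huδ : (1/κ^2)*(δ^2*κ^4) = δ^2*κ^2 := by field_simp
      nlinarith [mul_nonneg (sq_nonneg δ) (sq_nonneg κ)]
    have step1 : (δ^2 + 1/κ^2) * (κ^2 - 5/48*δ^2*κ^4*1) ≤ (δ^2 + 1/κ^2) * lambdaDelta2 ρ δ κ :=
      mul_le_mul_of_nonneg_left hlamlb (by positivity)
    have step2 : (δ^2 + 1/κ^2) * lambdaDelta2 ρ δ κ ≤ (C*δ^2 + 1/κ^2) * lambdaDelta2 ρ δ κ := by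
      refine mul_le_mul_of_nonneg_right ?_ hlampos.le
      nlinarith [sq_nonneg δ]
    linarith
  · -- large case
    have hFlb : π/3 * c1 ≤ Fs := by
      have hii1 : IntervalIntegrable (fun θ => nlI ρ (δ * κ * Real.cos θ)) volume 0 (π/3) :=
        hθcont.intervalIntegrable _ _
      have hii2 : IntervalIntegrable (fun θ => nlI ρ (δ * κ * Real.cos θ)) volume (π/3) (π/2) :=
        hθcont.intervalIntegrable _ _
      have hsplit : Fs = (∫ θ in (0:ℝ)..(π/3), nlI ρ (δ * κ * Real.cos θ))
          + ∫ θ in (π/3)..(π/2), nlI ρ (δ * κ * Real.cos θ) := by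
        rw [hFsdef, ← intervalIntegral.integral_add_adjacent_intervals hii1 hii2]
      have hptwise : ∀ θ ∈ Set.Icc (0:ℝ) (π/3), c1 ≤ nlI ρ (δ * κ * Real.cos θ) := by
        intro θ hθ
        refine hc1lb _ ?_
        have hcos : (1/2 : ℝ) ≤ Real.cos θ := by
          have h := Real.cos_le_cos_of_nonneg_of_le_pi hθ.1 (by linarith) hθ.2
          rwa [Real.cos_pi_div_three] at h
        have h2 := mul_le_mul_of_nonneg_right hs.le (by linarith : (0:ℝ) ≤ Real.cos θ)
        rw [one_mul] at h2
        linarith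
      have hpart1 : π/3 * c1 ≤ ∫ θ in (0:ℝ)..(π/3), nlI ρ (δ * κ * Real.cos θ) := by
        have hmono := intervalIntegral.integral_mono_on (by positivity : (0:ℝ) ≤ π/3)
          (intervalIntegrable_const : IntervalIntegrable (fun _ => c1) volume 0 (π/3))
          hii1 hptwise
        rw [intervalIntegral.integral_const] at hmono
        calc π/3 * c1 = (π/3 - 0) • c1 := by rw [smul_eq_mul]; ring
          _ ≤ _ := hmono
      have hpart2 : 0 ≤ ∫ θ in (π/3)..(π/2), nlI ρ (δ * κ * Real.cos θ) :=
        intervalIntegral.integral_nonneg (by linarith) (fun θ _ => nlI_nonneg ρ hpos _)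
      linarith
    have hlamlb : 4 * (π/3 * c1) / δ ^ 2 ≤ lambdaDelta2 ρ δ κ := by
      rw [hlameq]
      have h0 : (0:ℝ) < 4 / δ^2 := by positivity
      calc 4*(π/3*c1)/δ^2 = 4/δ^2 * (π/3*c1) := by ring
        _ ≤ 4/δ^2 * Fs := mul_le_mul_of_nonneg_left hFlb h0.le
    have hc2pos : (0:ℝ) < 4 * (π/3 * c1) := by positivity
    have hlampos : (0:ℝ) < lambdaDelta2 ρ δ κ :=
      lt_of_lt_of_le (by positivity) hlamlb
    refine ⟨by positivity, ?_, hG3⟩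
    have h1 : 1 / lambdaDelta2 ρ δ κ ≤ 1 / (4 * (π/3 * c1) / δ ^ 2) :=
      one_div_le_one_div_of_le (by positivity) hlamlb
    have h2 : 1 / (4 * (π/3 * c1) / δ ^ 2) = δ^2 * (3 / (4 * π * c1)) := by
      field_simp
    have h3 : δ^2 * (3 / (4 * π * c1)) ≤ C * δ^2 := by
      nlinarith [sq_nonneg δ, hC2, hδ2pos]
    have h4 : 0 < 1/κ^2 := by positivity
    linarith
end
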